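/- Let m ≥ 2, 1 ≤ k ≤ m, let a^1, …, a^m ∈ ℝ^n, let F be a nonempty compact convex subset of ℝ^n with 0 ∈ int(F) and Minkowski gauge ρ_F. For x = (x^1,…,x^k) ∈ (ℝ^n)^k define g(x) = Σ_{i=1}^m Σ_{r=1}^k ρ_F(x^r − a^i) and h(x) = Σ_{i=1}^m max_{ℓ=1,…,k} Σ_{r=1, r≠ℓ}^k ρ_F(x^r − a^i). Then f_F(x) = g(x) − h(x) for every x ∈ (ℝ^n)^k, where f_F(x^1,…,x^k) = Σ_{i=1}^m min_{ℓ=1,…,k} ρ_F(x^ℓ − a^i); moreover g and h are convex functions on (ℝ^n)^k. -/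

import Mathlib

/-- `min_{ℓ=1,…,k} ρ_F(x^ℓ − p)`. -/
noncomputable def minGauge {n k : ℕ} (hk : 0 < k) (F : Set (EuclideanSpace ℝ (Fin n)))
    (x : Fin k → EuclideanSpace ℝ (Fin n)) (p : EuclideanSpace ℝ (Fin n)) : ℝ :=
  Finset.univ.inf' ⟨⟨0, hk⟩, Finset.mem_univ _⟩ fun ℓ => gauge F (x ℓ - p)

/-- The generalized multi-source Weber objective
`f_F(x) = Σ_i min_ℓ ρ_F(x^ℓ − a^i)`. -/
noncomputable def weberObj {n m k : ℕ} (hk : 0 < k) (F : Set (EuclideanSpace ℝ (Fin n)))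
    (a : Fin m → EuclideanSpace ℝ (Fin n)) (x : Fin k → EuclideanSpace ℝ (Fin n)) : ℝ :=
  ∑ i, minGauge hk F x (a i)

lemma sup'_sub_eq {ι : Type*} (s : Finset ι) (hs : s.Nonempty) (T : ℝ) (f : ι → ℝ) :
    s.sup' hs (fun ℓ => T - f ℓ) = T - s.inf' hs f := by
  apply le_antisymm
  · refine Finset.sup'_le hs (fun ℓ => T - f ℓ) fun ℓ hℓ => ?_
    exact sub_le_sub_left (Finset.inf'_le _ hℓ) T
  · obtain ⟨ℓ, hℓ, hℓeq⟩ := Finset.exists_mem_eq_inf' hs f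
    rw [hℓeq]
    exact Finset.le_sup' (fun ℓ => T - f ℓ) hℓ

lemma convexOn_finsum {E : Type*} [AddCommGroup E] [Module ℝ E] {ι : Type*} (s : Finset ι)
    (f : ι → E → ℝ) (hf : ∀ i ∈ s, ConvexOn ℝ Set.univ (f i)) :
    ConvexOn ℝ Set.univ (fun x => ∑ i ∈ s, f i x) := by
  refine ⟨convex_univ, fun u _ v _ p q hp hq hpq => ?_⟩
  simp only [smul_eq_mul, Finset.mul_sum]
  rw [← Finset.sum_add_distrib]
  refine Finset.sum_le_sum fun i hi => ?_
  have := (hf i hi).2 (Set.mem_univ u) (Set.mem_univ v) hp hq hpq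
  simpa [smul_eq_mul] using this

lemma convexOn_sup' {E : Type*} [AddCommGroup E] [Module ℝ E] {ι : Type*} (s : Finset ι)
    (hs : s.Nonempty) (f : ι → E → ℝ) (hf : ∀ i ∈ s, ConvexOn ℝ Set.univ (f i)) :
    ConvexOn ℝ Set.univ (fun x => s.sup' hs (fun i => f i x)) := by
  refine ⟨convex_univ, fun u _ v _ p q hp hq hpq => ?_⟩
  refine Finset.sup'_le hs _ fun i hi => ?_
  have h1 := (hf i hi).2 (Set.mem_univ u) (Set.mem_univ v) hp hq hpq
  simp only [smul_eq_mul] at h1 ⊢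
  refine le_trans h1 ?_
  exact add_le_add (mul_le_mul_of_nonneg_left (Finset.le_sup' (fun j => f j u) hi) hp)
    (mul_le_mul_of_nonneg_left (Finset.le_sup' (fun j => f j v) hi) hq)

theorem stmt9 (n m k : ℕ) (hm : 2 ≤ m) (hk : 1 ≤ k) (hkm : k ≤ m)
    (a : Fin m → EuclideanSpace ℝ (Fin n))
    (F : Set (EuclideanSpace ℝ (Fin n)))
    (hne : F.Nonempty) (hcomp : IsCompact F) (hconv : Convex ℝ F)
    (h0 : (0 : EuclideanSpace ℝ (Fin n)) ∈ interior F)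
    (g h : (Fin k → EuclideanSpace ℝ (Fin n)) → ℝ)
    (hg : ∀ x, g x = ∑ i, ∑ r, gauge F (x r - a i))
    (hh : ∀ x, h x = ∑ i : Fin m,
      Finset.univ.sup' ⟨⟨0, hk⟩, Finset.mem_univ _⟩
        (fun ℓ => ∑ r ∈ Finset.univ.erase ℓ, gauge F (x r - a i))) :
    (∀ x, weberObj hk F a x = g x - h x) ∧
      ConvexOn ℝ Set.univ g ∧ ConvexOn ℝ Set.univ h := by
  have habs : Absorbent ℝ F := absorbent_nhds_zero (mem_interior_iff_mem_nhds.mp h0)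
  have hgc : ∀ (r : Fin k) (p : EuclideanSpace ℝ (Fin n)),
      ConvexOn ℝ Set.univ (fun x : Fin k → EuclideanSpace ℝ (Fin n) => gauge F (x r - p)) := by
    intro r p
    refine ⟨convex_univ, fun u _ v _ s t hs ht hst => ?_⟩
    have key : (s • u + t • v) r - p = s • (u r - p) + t • (v r - p) := by
      have h2 : s • (u r - p) + t • (v r - p) = (s • u r + t • v r) - (s + t) • p := by
        module
      rw [h2, hst, one_smul]
      rfl
    show gauge F ((s • u + t • v) r - p)
        ≤ s • gauge F (u r - p) + t • gauge F (v r - p)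
    simp only [smul_eq_mul]
    rw [key]
    calc gauge F (s • (u r - p) + t • (v r - p))
        ≤ gauge F (s • (u r - p)) + gauge F (t • (v r - p)) :=
          gauge_add_le hconv habs _ _
      _ = s * gauge F (u r - p) + t * gauge F (v r - p) := by
          rw [gauge_smul_of_nonneg hs, gauge_smul_of_nonneg ht, smul_eq_mul, smul_eq_mul]
  refine ⟨?_, ?_, ?_⟩
  · intro x
    rw [hg, hh, ← Finset.sum_sub_distrib]
    unfold weberObj minGauge
    refine Finset.sum_congr rfl fun i _ => ?_
    have key : ∀ ℓ : Fin k, ∑ r ∈ Finset.univ.erase ℓ, gauge F (x r - a i)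
        = (∑ r, gauge F (x r - a i)) - gauge F (x ℓ - a i) := by
      intro ℓ
      rw [eq_sub_iff_add_eq, add_comm]
      exact Finset.add_sum_erase _ (fun r => gauge F (x r - a i)) (Finset.mem_univ ℓ)
    simp only [key]
    have hsup := sup'_sub_eq Finset.univ ⟨⟨0, hk⟩, Finset.mem_univ _⟩
      (∑ r, gauge F (x r - a i)) (fun ℓ => gauge F (x ℓ - a i))
    linarith
  · have hgf : g = fun x => ∑ i, ∑ r, gauge F (x r - a i) := funext hg
    rw [hgf]
    exact convexOn_finsum _ _ fun i _ =>
      convexOn_finsum _ _ fun r _ => hgc r (a i)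
  · have hhf : h = fun x => ∑ i : Fin m,
        Finset.univ.sup' ⟨⟨0, hk⟩, Finset.mem_univ _⟩
          (fun ℓ => ∑ r ∈ Finset.univ.erase ℓ, gauge F (x r - a i)) := funext hh
    rw [hhf]
    exact convexOn_finsum _ _ fun i _ =>
      convexOn_sup' _ _ _ fun ℓ _ =>
        convexOn_finsum _ _ fun r _ => hgc r (a i)
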